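/- Let T_n (n ≥ 1) be the n×n symmetric banded Toeplitz matrices with symbol f(θ) = t_0 + 2 Σ_{k=1}^{m-1} t_k cos(kθ), where t_0, ..., t_{m-1} are fixed real numbers. Then the smallest eigenvalue λ_min(T_n) is nonincreasing in n and converges as n → ∞ to inf_{θ ∈ [0, 2π]} f(θ). -/

import Mathlib

open Finset Matrix

/-- The `n×n` symmetric banded Toeplitz matrix with entries `t_{|i−j|}`
(for `|i−j| ≤ m−1`, zero otherwise). -/
def bandToeplitz (m n : ℕ) (t : ℕ → ℝ) : Matrix (Fin n) (Fin n) ℝ :=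
  Matrix.of fun i j =>
    if Nat.dist (i : ℕ) (j : ℕ) ≤ m - 1 then t (Nat.dist (i : ℕ) (j : ℕ)) else 0

/-! ### Auxiliary definitions -/

/-- The entries of the banded Toeplitz matrix as a function of natural indices. -/
def bandG (m : ℕ) (t : ℕ → ℝ) (i j : ℕ) : ℝ :=
  if Nat.dist i j ≤ m - 1 then t (Nat.dist i j) else 0

lemma bandToeplitz_apply (m N : ℕ) (t : ℕ → ℝ) (i j : Fin N) :
    bandToeplitz m N t i j = bandG m t (i : ℕ) (j : ℕ) := rfl

/-- The symbol of the banded Toeplitz matrices. -/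
noncomputable def symbolF (m : ℕ) (t : ℕ → ℝ) (θ : ℝ) : ℝ :=
  t 0 + 2 * ∑ k ∈ Finset.Icc 1 (m - 1), t k * Real.cos ((k : ℝ) * θ)

/-- The squared modulus of the trigonometric polynomial with coefficients `v`. -/
noncomputable def trigP (N : ℕ) (v : Fin N → ℝ) (θ : ℝ) : ℝ :=
  (∑ j : Fin N, v j * Real.cos ((j : ℝ) * θ)) ^ 2
    + (∑ j : Fin N, v j * Real.sin ((j : ℝ) * θ)) ^ 2

/-- Partial sums of the symbol-weighted Toeplitz quadratic form for test vectors. -/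
noncomputable def bS (m : ℕ) (t : ℕ → ℝ) (θ : ℝ) (N : ℕ) : ℝ :=
  ∑ j ∈ Finset.range N, ∑ k ∈ Finset.range N,
    bandG m t j k * Real.cos ((j : ℝ) * θ - (k : ℝ) * θ)

/-! ### Hermiticity and the Rayleigh lower bound -/

lemma bandToeplitz_isHermitian (m N : ℕ) (t : ℕ → ℝ) : (bandToeplitz m N t).IsHermitian := by
  unfold Matrix.IsHermitian
  ext i j
  simp only [bandToeplitz, conjTranspose_apply, of_apply, star_trivial]
  rw [Nat.dist_comm]

lemma rayleigh_lb (m N : ℕ) (t : ℕ → ℝ) (c : ℝ)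
    (hc : ∀ r ∈ {r : ℝ | ∃ v : Fin N → ℝ, v ≠ 0 ∧
      (bandToeplitz m N t).mulVec v = r • v}, c ≤ r)
    (v : Fin N → ℝ) :
    c * (v ⬝ᵥ v) ≤ v ⬝ᵥ (bandToeplitz m N t).mulVec v := by
  set A := bandToeplitz m N t with hA
  set B := A - c • (1 : Matrix (Fin N) (Fin N) ℝ) with hBdef
  have hAh := bandToeplitz_isHermitian m N t
  have hBh : B.IsHermitian := by
    refine hAh.sub ?_
    unfold Matrix.IsHermitian
    ext i j
    simp [Matrix.one_apply, smul_eq_mul]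
    split <;> split <;> simp_all
  have hBpos : B.PosSemidef := by
    refine hBh.posSemidef_iff_eigenvalues_nonneg.mpr (fun i => (?_ : (0:ℝ) ≤ hBh.eigenvalues i))
    have hev := hBh.mulVec_eigenvectorBasis i
    set w : Fin N → ℝ := ⇑(hBh.eigenvectorBasis i) with hw
    have hwne : w ≠ 0 := by
      intro h0
      exact hBh.eigenvectorBasis.orthonormal.ne_zero i (by ext j; exact congrFun h0 j)
    have hAw : A.mulVec w = (hBh.eigenvalues i + c) • w := by
      have hBw : B.mulVec w = A.mulVec w - c • w := by
        rw [hBdef, Matrix.sub_mulVec, Matrix.smul_mulVec, Matrix.one_mulVec]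
      rw [hBw] at hev
      rw [sub_eq_iff_eq_add.mp hev]
      ext j; simp [add_smul]; ring
    have := hc (hBh.eigenvalues i + c) ⟨w, hwne, hAw⟩
    linarith
  have h0 := hBpos.dotProduct_mulVec_nonneg v
  have hstar : star v = v := by ext j; simp
  rw [hstar] at h0
  have hBv : B.mulVec v = A.mulVec v - c • v := by
    rw [hBdef, Matrix.sub_mulVec, Matrix.smul_mulVec, Matrix.one_mulVec]
  rw [hBv, dotProduct_sub, dotProduct_smul, smul_eq_mul] at h0
  linarith

/-! ### Padding -/

lemma dot_pad (n : ℕ) (v : Fin (n+1) → ℝ) :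
    (Fin.snoc v 0 : Fin (n+2) → ℝ) ⬝ᵥ (Fin.snoc v 0 : Fin (n+2) → ℝ) = v ⬝ᵥ v := by
  simp [dotProduct, Fin.sum_univ_castSucc]

lemma quad_pad (m n : ℕ) (t : ℕ → ℝ) (v : Fin (n+1) → ℝ) :
    (Fin.snoc v 0 : Fin (n+2) → ℝ) ⬝ᵥ (bandToeplitz m (n+2) t).mulVec (Fin.snoc v 0)
      = v ⬝ᵥ (bandToeplitz m (n+1) t).mulVec v := by
  simp only [dotProduct, Matrix.mulVec, bandToeplitz_apply, Fin.sum_univ_castSucc,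
    Fin.snoc_castSucc, Fin.snoc_last, Fin.coe_castSucc, Fin.val_last,
    mul_zero, zero_mul, add_zero, zero_add, Finset.sum_const_zero]

/-! ### The basic integral -/

lemma integral_cos_nat (a b : ℕ) :
    ∫ θ in (0:ℝ)..(2*Real.pi), Real.cos ((a:ℝ)*θ - (b:ℝ)*θ)
      = if a = b then 2*Real.pi else 0 := by
  rcases eq_or_ne a b with rfl | hab
  · simp [Real.pi_pos.le]
  · have hc : ((a:ℝ) - b) ≠ 0 := by
      rw [sub_ne_zero]
      exact_mod_cast hab
    set c : ℝ := (a:ℝ) - b with hcdef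
    have harg : ∀ θ : ℝ, (a:ℝ)*θ - (b:ℝ)*θ = c * θ := by intro θ; rw [hcdef]; ring
    simp only [harg]
    have hderiv : ∀ θ ∈ Set.uIcc (0:ℝ) (2*Real.pi),
        HasDerivAt (fun x => c⁻¹ * Real.sin (c*x)) (Real.cos (c*θ)) θ := by
      intro θ _
      have h1 : HasDerivAt (fun x : ℝ => c * x) c θ := by
        simpa using (hasDerivAt_id θ).const_mul c
      have h2 := (h1.sin).const_mul c⁻¹
      rw [show c⁻¹ * (Real.cos (c * θ) * c) = Real.cos (c*θ) by field_simp] at h2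
      exact h2
    rw [intervalIntegral.integral_eq_sub_of_hasDerivAt hderiv
      (by apply Continuous.intervalIntegrable; fun_prop)]
    have h0 : Real.sin (c * (2*Real.pi)) = 0 := by
      have harg2 : c * (2*Real.pi) = ((2*(a:ℤ) - 2*(b:ℤ) : ℤ) : ℝ) * Real.pi := by
        push_cast [hcdef]; ring
      rw [harg2, Real.sin_int_mul_pi]
    simp [hab, h0]

/-! ### The entry identity -/

lemma entry_eq' (m : ℕ) (hm : 1 ≤ m) (t : ℕ → ℝ) (x y : ℝ) (j k : ℕ) :
    x * y * t 0 * (if j = k then 2*Real.pi else 0)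
      + ∑ d ∈ Finset.Icc 1 (m-1), x * y * t d *
        ((if d + j = k then 2*Real.pi else 0) + (if d + k = j then 2*Real.pi else 0))
      = 2*Real.pi * (x * (bandG m t j k * y)) := by
  unfold bandG
  rcases lt_trichotomy j k with h | rfl | h
  · rw [if_neg h.ne]
    have h1 : ∀ d ∈ Finset.Icc 1 (m-1),
        x * y * t d * ((if d + j = k then 2*Real.pi else 0) + (if d + k = j then 2*Real.pi else 0))
        = if d = k - j then x * y * t d * (2*Real.pi) else 0 := by
      intro d hd
      rw [Finset.mem_Icc] at hd
      by_cases hdk : d = k - j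
      · rw [if_pos (by omega), if_neg (by omega), if_pos hdk]; ring
      · rw [if_neg (by omega), if_neg (by omega), if_neg hdk]; ring
    rw [Finset.sum_congr rfl h1,
      Finset.sum_ite_eq' (Finset.Icc 1 (m-1)) (k-j) (fun d => x * y * t d * (2*Real.pi))]
    have hd : Nat.dist j k = k - j := Nat.dist_eq_sub_of_le h.le
    rw [hd, mul_zero, zero_add]
    simp only [Finset.mem_Icc]
    by_cases hkm : k - j ≤ m - 1
    · rw [if_pos ⟨by omega, hkm⟩, if_pos hkm]; ring
    · rw [if_neg (by omega), if_neg hkm]; ring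
  · rw [if_pos rfl]
    have h1 : ∀ d ∈ Finset.Icc 1 (m-1),
        x * y * t d * ((if d + j = j then 2*Real.pi else 0) + (if d + j = j then 2*Real.pi else 0))
          = 0 := by
      intro d hd
      rw [Finset.mem_Icc] at hd
      rw [if_neg (by omega)]; ring
    rw [Finset.sum_congr rfl h1, Finset.sum_const_zero, add_zero]
    rw [Nat.dist_self, if_pos (Nat.zero_le _)]; ring
  · rw [if_neg h.ne']
    have h1 : ∀ d ∈ Finset.Icc 1 (m-1),
        x * y * t d * ((if d + j = k then 2*Real.pi else 0) + (if d + k = j then 2*Real.pi else 0))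
        = if d = j - k then x * y * t d * (2*Real.pi) else 0 := by
      intro d hd
      rw [Finset.mem_Icc] at hd
      by_cases hdk : d = j - k
      · rw [if_neg (by omega), if_pos (by omega), if_pos hdk]; ring
      · rw [if_neg (by omega), if_neg (by omega), if_neg hdk]; ring
    rw [Finset.sum_congr rfl h1,
      Finset.sum_ite_eq' (Finset.Icc 1 (m-1)) (j-k) (fun d => x * y * t d * (2*Real.pi))]
    have hd : Nat.dist j k = j - k := Nat.dist_eq_sub_of_le_right h.le
    rw [hd, mul_zero, zero_add]
    simp only [Finset.mem_Icc]
    by_cases hkm : j - k ≤ m - 1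
    · rw [if_pos ⟨by omega, hkm⟩, if_pos hkm]; ring
    · rw [if_neg (by omega), if_neg hkm]; ring

/-! ### The Fourier lower bound for the quadratic form -/

lemma quad_ge (m : ℕ) (hm : 1 ≤ m) (t : ℕ → ℝ) (N : ℕ) (c : ℝ)
    (hc : ∀ θ ∈ Set.Icc (0:ℝ) (2*Real.pi), c ≤ symbolF m t θ)
    (v : Fin N → ℝ) :
    c * (v ⬝ᵥ v) ≤ v ⬝ᵥ (bandToeplitz m N t).mulVec v := by
  have h2pi : (0:ℝ) < 2*Real.pi := by positivity
  have hP0 : ∀ θ, 0 ≤ trigP N v θ := by intro θ; unfold trigP; positivity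
  have hPeq : ∀ θ, trigP N v θ
      = ∑ j : Fin N, ∑ k : Fin N, v j * v k * Real.cos (((j:ℕ):ℝ)*θ - ((k:ℕ):ℝ)*θ) := by
    intro θ
    unfold trigP
    rw [pow_two, pow_two, Finset.sum_mul_sum, Finset.sum_mul_sum, ← Finset.sum_add_distrib]
    refine Finset.sum_congr rfl fun j _ => ?_
    rw [← Finset.sum_add_distrib]
    refine Finset.sum_congr rfl fun k _ => ?_
    rw [Real.cos_sub]
    ring
  have hPcont : Continuous (trigP N v) := by
    unfold trigP
    fun_prop
  have hfcont : Continuous (symbolF m t) := by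
    unfold symbolF
    fun_prop
  -- the integral of trigP
  have hI1 : ∫ θ in (0:ℝ)..(2*Real.pi), trigP N v θ = 2*Real.pi * (v ⬝ᵥ v) := by
    simp only [hPeq]
    rw [intervalIntegral.integral_finset_sum (fun j _ => by
      apply Continuous.intervalIntegrable
      apply continuous_finset_sum
      intro k _
      fun_prop)]
    rw [Finset.sum_congr rfl (fun j _ => intervalIntegral.integral_finset_sum (fun k _ => by
      apply Continuous.intervalIntegrable; fun_prop))]
    have heval : ∀ j k : Fin N,
        (∫ θ in (0:ℝ)..(2*Real.pi), v j * v k * Real.cos (((j:ℕ):ℝ)*θ - ((k:ℕ):ℝ)*θ))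
          = if (j:ℕ) = (k:ℕ) then v j * v k * (2*Real.pi) else 0 := by
      intro j k
      rw [intervalIntegral.integral_const_mul, integral_cos_nat]
      split <;> ring
    rw [Finset.sum_congr rfl (fun j _ => Finset.sum_congr rfl (fun k _ => heval j k))]
    simp only [Fin.val_inj]
    rw [Finset.sum_congr rfl (fun j _ =>
      Finset.sum_ite_eq Finset.univ j (fun k => v j * v k * (2*Real.pi)))]
    simp only [Finset.mem_univ, if_pos]
    rw [dotProduct, Finset.mul_sum]
    exact Finset.sum_congr rfl fun j _ => by ring
  -- the integral of symbolF * trigP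
  have trig2 : ∀ (d j k : ℕ) (θ : ℝ),
      Real.cos (((d+j:ℕ):ℝ)*θ - (k:ℝ)*θ) + Real.cos (((d+k:ℕ):ℝ)*θ - (j:ℝ)*θ)
        = 2 * Real.cos ((d:ℝ)*θ) * Real.cos ((j:ℝ)*θ - (k:ℝ)*θ) := by
    intro d j k θ
    have e1 : ((d+j:ℕ):ℝ)*θ - (k:ℝ)*θ = (d:ℝ)*θ + ((j:ℝ)*θ - (k:ℝ)*θ) := by push_cast; ring
    have e2 : ((d+k:ℕ):ℝ)*θ - (j:ℝ)*θ = (d:ℝ)*θ - ((j:ℝ)*θ - (k:ℝ)*θ) := by push_cast; ring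
    rw [e1, e2]
    simp only [Real.cos_add, Real.cos_sub]
    ring
  have hfP : ∀ θ, symbolF m t θ * trigP N v θ
      = ∑ j : Fin N, ∑ k : Fin N,
          (v j * v k * t 0 * Real.cos (((j:ℕ):ℝ)*θ - ((k:ℕ):ℝ)*θ)
            + ∑ d ∈ Finset.Icc 1 (m-1), v j * v k * t d *
              (Real.cos (((d+(j:ℕ):ℕ):ℝ)*θ - ((k:ℕ):ℝ)*θ)
                + Real.cos (((d+(k:ℕ):ℕ):ℝ)*θ - ((j:ℕ):ℝ)*θ))) := by
    intro θ
    rw [hPeq θ, Finset.mul_sum]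
    refine Finset.sum_congr rfl fun j _ => ?_
    rw [Finset.mul_sum]
    refine Finset.sum_congr rfl fun k _ => ?_
    have expand : ∀ d ∈ Finset.Icc 1 (m-1), v j * v k * t d *
          (Real.cos (((d+(j:ℕ):ℕ):ℝ)*θ - ((k:ℕ):ℝ)*θ)
            + Real.cos (((d+(k:ℕ):ℕ):ℝ)*θ - ((j:ℕ):ℝ)*θ))
        = (v j * v k * Real.cos (((j:ℕ):ℝ)*θ - ((k:ℕ):ℝ)*θ) * 2) * (t d * Real.cos ((d:ℝ)*θ)) := by
      intro d _
      rw [trig2 d (j:ℕ) (k:ℕ) θ]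
      ring
    rw [Finset.sum_congr rfl expand, ← Finset.mul_sum]
    unfold symbolF
    ring
  have hI2 : ∫ θ in (0:ℝ)..(2*Real.pi), symbolF m t θ * trigP N v θ
      = 2*Real.pi * (v ⬝ᵥ (bandToeplitz m N t).mulVec v) := by
    simp only [hfP]
    rw [intervalIntegral.integral_finset_sum (fun j _ => by
      apply Continuous.intervalIntegrable
      apply continuous_finset_sum
      intro k _
      apply Continuous.add
      · fun_prop
      · apply continuous_finset_sum; intro d _; fun_prop)]
    rw [Finset.sum_congr rfl (fun j _ => intervalIntegral.integral_finset_sum (fun k _ => by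
      apply Continuous.intervalIntegrable
      apply Continuous.add
      · fun_prop
      · apply continuous_finset_sum; intro d _; fun_prop))]
    have heval : ∀ j k : Fin N,
        (∫ θ in (0:ℝ)..(2*Real.pi),
          (v j * v k * t 0 * Real.cos (((j:ℕ):ℝ)*θ - ((k:ℕ):ℝ)*θ)
            + ∑ d ∈ Finset.Icc 1 (m-1), v j * v k * t d *
              (Real.cos (((d+(j:ℕ):ℕ):ℝ)*θ - ((k:ℕ):ℝ)*θ)
                + Real.cos (((d+(k:ℕ):ℕ):ℝ)*θ - ((j:ℕ):ℝ)*θ))))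
        = 2*Real.pi * (v j * (bandG m t (j:ℕ) (k:ℕ) * v k)) := by
      intro j k
      rw [intervalIntegral.integral_add
        (by apply Continuous.intervalIntegrable; fun_prop)
        (by apply Continuous.intervalIntegrable
            apply continuous_finset_sum; intro d _; fun_prop)]
      rw [intervalIntegral.integral_finset_sum (fun d _ => by
        apply Continuous.intervalIntegrable; fun_prop)]
      rw [intervalIntegral.integral_const_mul, integral_cos_nat]
      have hd : ∀ d ∈ Finset.Icc 1 (m-1),
          (∫ θ in (0:ℝ)..(2*Real.pi), v j * v k * t d *
            (Real.cos (((d+(j:ℕ):ℕ):ℝ)*θ - ((k:ℕ):ℝ)*θ)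
              + Real.cos (((d+(k:ℕ):ℕ):ℝ)*θ - ((j:ℕ):ℝ)*θ)))
          = v j * v k * t d * ((if d + (j:ℕ) = (k:ℕ) then 2*Real.pi else 0)
              + (if d + (k:ℕ) = (j:ℕ) then 2*Real.pi else 0)) := by
        intro d _
        rw [intervalIntegral.integral_const_mul,
          intervalIntegral.integral_add
            (by apply Continuous.intervalIntegrable; fun_prop)
            (by apply Continuous.intervalIntegrable; fun_prop),
          integral_cos_nat, integral_cos_nat]
      rw [Finset.sum_congr rfl hd]
      have := entry_eq' m hm t (v j) (v k) (j:ℕ) (k:ℕ)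
      rw [← this]
    rw [Finset.sum_congr rfl (fun j _ => Finset.sum_congr rfl (fun k _ => heval j k))]
    have hQ : v ⬝ᵥ (bandToeplitz m N t).mulVec v
        = ∑ j : Fin N, ∑ k : Fin N, v j * (bandG m t (j:ℕ) (k:ℕ) * v k) := by
      simp only [dotProduct, Matrix.mulVec, bandToeplitz_apply, Finset.mul_sum]
    rw [hQ, Finset.mul_sum]
    exact Finset.sum_congr rfl fun j _ => by rw [Finset.mul_sum]
  -- monotonicity of the integral
  have hmono : (∫ θ in (0:ℝ)..(2*Real.pi), c * trigP N v θ)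
      ≤ ∫ θ in (0:ℝ)..(2*Real.pi), symbolF m t θ * trigP N v θ := by
    apply intervalIntegral.integral_mono_on h2pi.le
    · exact (continuous_const.mul hPcont).intervalIntegrable _ _
    · exact (hfcont.mul hPcont).intervalIntegrable _ _
    · intro θ hθ
      exact mul_le_mul_of_nonneg_right (hc θ hθ) (hP0 θ)
  rw [intervalIntegral.integral_const_mul, hI1, hI2] at hmono
  have h3 : (2*Real.pi) * (c * (v ⬝ᵥ v)) ≤ (2*Real.pi) * (v ⬝ᵥ (bandToeplitz m N t).mulVec v) := by
    nlinarith [hmono]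
  exact le_of_mul_le_mul_left h3 h2pi
/-! ### Telescoping for the upper bound -/

lemma bS_boundary (m : ℕ) (t : ℕ → ℝ) (θ : ℝ) (N : ℕ) (hN : m - 1 ≤ N) :
    ∑ k ∈ Finset.range N, bandG m t N k * Real.cos ((N:ℝ)*θ - (k:ℝ)*θ)
      = ∑ k ∈ Finset.Icc 1 (m-1), t k * Real.cos ((k:ℝ)*θ) := by
  rw [← Finset.sum_range_reflect]
  have h1 : ∀ i ∈ Finset.range N,
      bandG m t N (N-1-i) * Real.cos ((N:ℝ)*θ - ((N-1-i : ℕ):ℝ)*θ)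
        = if i + 1 ≤ m - 1 then t (i+1) * Real.cos (((i+1:ℕ):ℝ)*θ) else 0 := by
    intro i hi
    rw [Finset.mem_range] at hi
    have hdist : Nat.dist N (N-1-i) = i + 1 := by
      rw [Nat.dist_eq_sub_of_le_right (by omega)]; omega
    have hcast : ((N-1-i:ℕ):ℝ) = (N:ℝ) - ((i+1:ℕ):ℝ) := by
      rw [eq_sub_iff_add_eq, ← Nat.cast_add]
      norm_cast
      omega
    have hcos : (N:ℝ)*θ - ((N-1-i:ℕ):ℝ)*θ = ((i+1:ℕ):ℝ)*θ := by
      rw [hcast]; ring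
    rw [hcos]
    unfold bandG
    rw [hdist]
    split <;> simp
  rw [Finset.sum_congr rfl h1]
  rw [← Finset.sum_subset (Finset.range_subset_range.mpr hN)
    (fun x _ hx => by rw [if_neg (by rw [Finset.mem_range] at hx; omega)])]
  rw [Finset.sum_congr rfl (fun i hi => if_pos (by rw [Finset.mem_range] at hi; omega))]
  rw [← Finset.Ico_add_one_right_eq_Icc, Finset.sum_Ico_eq_sum_range]
  apply Finset.sum_congr (by congr 1 <;> omega)
  intro i _
  rw [add_comm 1 i]

lemma bS_boundary' (m : ℕ) (t : ℕ → ℝ) (θ : ℝ) (N : ℕ) (hN : m - 1 ≤ N) :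
    ∑ j ∈ Finset.range N, bandG m t j N * Real.cos ((j:ℝ)*θ - (N:ℝ)*θ)
      = ∑ k ∈ Finset.Icc 1 (m-1), t k * Real.cos ((k:ℝ)*θ) := by
  rw [← bS_boundary m t θ N hN]
  apply Finset.sum_congr rfl
  intro j _
  have h1 : bandG m t j N = bandG m t N j := by unfold bandG; rw [Nat.dist_comm]
  have h2 : Real.cos ((j:ℝ)*θ - (N:ℝ)*θ) = Real.cos ((N:ℝ)*θ - (j:ℝ)*θ) := by
    rw [← Real.cos_neg]; ring_nf
  rw [h1, h2]

lemma bS_step (m : ℕ) (hm : 1 ≤ m) (t : ℕ → ℝ) (θ : ℝ) (N : ℕ) (hN : m - 1 ≤ N) :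
    bS m t θ (N+1) = bS m t θ N + symbolF m t θ := by
  have hsplit : bS m t θ (N+1)
      = (∑ j ∈ Finset.range N, (∑ k ∈ Finset.range N,
          bandG m t j k * Real.cos ((j:ℝ)*θ - (k:ℝ)*θ)
          + bandG m t j N * Real.cos ((j:ℝ)*θ - (N:ℝ)*θ)))
        + (∑ k ∈ Finset.range N, bandG m t N k * Real.cos ((N:ℝ)*θ - (k:ℝ)*θ)
          + bandG m t N N * Real.cos ((N:ℝ)*θ - (N:ℝ)*θ)) := by
    unfold bS
    rw [Finset.sum_range_succ]
    congr 1
    · exact Finset.sum_congr rfl fun j _ => Finset.sum_range_succ _ N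
    · exact Finset.sum_range_succ _ N
  rw [hsplit, Finset.sum_add_distrib]
  have hdiag : bandG m t N N * Real.cos ((N:ℝ)*θ - (N:ℝ)*θ) = t 0 := by
    unfold bandG
    rw [Nat.dist_self, if_pos (Nat.zero_le _), sub_self, Real.cos_zero, mul_one]
  rw [hdiag, bS_boundary m t θ N hN, bS_boundary' m t θ N hN]
  unfold bS symbolF
  ring

lemma bS_formula (m : ℕ) (hm : 1 ≤ m) (t : ℕ → ℝ) (θ : ℝ) :
    ∀ N, m - 1 ≤ N → bS m t θ N
      = bS m t θ (m-1) + ((N - (m-1) : ℕ) : ℝ) * symbolF m t θ := by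
  intro N hN
  induction N, hN using Nat.le_induction with
  | base => simp
  | succ N hN ih =>
    rw [bS_step m hm t θ N hN, ih]
    have : (N + 1 - (m-1) : ℕ) = (N - (m-1)) + 1 := by omega
    rw [this]
    push_cast
    ring

lemma quad_trig (m N : ℕ) (t : ℕ → ℝ) (θ : ℝ) :
    (fun j : Fin N => Real.cos (((j:ℕ):ℝ)*θ)) ⬝ᵥ
        (bandToeplitz m N t).mulVec (fun j => Real.cos (((j:ℕ):ℝ)*θ))
      + (fun j : Fin N => Real.sin (((j:ℕ):ℝ)*θ)) ⬝ᵥ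
        (bandToeplitz m N t).mulVec (fun j => Real.sin (((j:ℕ):ℝ)*θ))
      = bS m t θ N := by
  unfold bS
  rw [← Fin.sum_univ_eq_sum_range (fun j => ∑ k ∈ Finset.range N,
    bandG m t j k * Real.cos ((j:ℝ)*θ - (k:ℝ)*θ)) N]
  simp only [dotProduct, Matrix.mulVec, bandToeplitz_apply]
  rw [← Finset.sum_add_distrib]
  refine Finset.sum_congr rfl fun j _ => ?_
  rw [← Fin.sum_univ_eq_sum_range (fun k =>
    bandG m t (j:ℕ) k * Real.cos (((j:ℕ):ℝ)*θ - (k:ℝ)*θ)) N]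
  rw [Finset.mul_sum, Finset.mul_sum, ← Finset.sum_add_distrib]
  refine Finset.sum_congr rfl fun k _ => ?_
  rw [Real.cos_sub]
  ring

lemma dot_trig (N : ℕ) (θ : ℝ) :
    (fun j : Fin N => Real.cos (((j:ℕ):ℝ)*θ)) ⬝ᵥ (fun j : Fin N => Real.cos (((j:ℕ):ℝ)*θ))
      + (fun j : Fin N => Real.sin (((j:ℕ):ℝ)*θ)) ⬝ᵥ (fun j : Fin N => Real.sin (((j:ℕ):ℝ)*θ))
      = (N : ℝ) := by
  simp only [dotProduct]
  rw [← Finset.sum_add_distrib]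
  have h1 : ∀ j : Fin N, Real.cos (((j:ℕ):ℝ)*θ) * Real.cos (((j:ℕ):ℝ)*θ)
      + Real.sin (((j:ℕ):ℝ)*θ) * Real.sin (((j:ℕ):ℝ)*θ) = 1 := by
    intro j
    have := Real.sin_sq_add_cos_sq (((j:ℕ):ℝ)*θ)
    nlinarith [this]
  rw [Finset.sum_congr rfl (fun j _ => h1 j), Finset.sum_const, Finset.card_univ,
    Fintype.card_fin, nsmul_eq_mul, mul_one]

/-! ### The main theorem -/

theorem stmt_5 (m : ℕ) (hm : 1 ≤ m) (t : ℕ → ℝ)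
    (lmin : ℕ → ℝ)
    (hlmin : ∀ n : ℕ, lmin n ∈ {r : ℝ | ∃ v : Fin (n + 1) → ℝ, v ≠ 0 ∧
        (bandToeplitz m (n + 1) t).mulVec v = r • v} ∧
      ∀ r ∈ {r : ℝ | ∃ v : Fin (n + 1) → ℝ, v ≠ 0 ∧
        (bandToeplitz m (n + 1) t).mulVec v = r • v}, lmin n ≤ r) :
    Antitone lmin ∧
    Filter.Tendsto lmin Filter.atTop
      (nhds (sInf ((fun θ : ℝ => t 0 + 2 * ∑ k ∈ Finset.Icc 1 (m - 1),
        t k * Real.cos ((k : ℝ) * θ)) '' Set.Icc 0 (2 * Real.pi)))) := by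
  have hdotpos : ∀ {N : ℕ} (v : Fin N → ℝ), v ≠ 0 → 0 < v ⬝ᵥ v := by
    intro N v hv
    have h0 : 0 ≤ v ⬝ᵥ v := Finset.sum_nonneg (fun i _ => mul_self_nonneg (v i))
    rcases h0.lt_or_eq with h | h
    · exact h
    · exact absurd (dotProduct_self_eq_zero.mp h.symm) hv
  have hray : ∀ n (v : Fin (n+1) → ℝ), (bandToeplitz m (n+1) t).mulVec v = lmin n • v →
      v ⬝ᵥ (bandToeplitz m (n+1) t).mulVec v = lmin n * (v ⬝ᵥ v) := by
    intro n v hv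
    rw [hv, dotProduct_smul, smul_eq_mul]
  have hanti : Antitone lmin := by
    apply antitone_nat_of_succ_le
    intro n
    obtain ⟨⟨v, hv0, hveq⟩, -⟩ := hlmin n
    have h1 := rayleigh_lb m (n+2) t (lmin (n+1)) (hlmin (n+1)).2 (Fin.snoc v 0)
    rw [quad_pad, dot_pad, hray n v hveq] at h1
    have h2 := hdotpos v hv0
    nlinarith [h1]
  refine ⟨hanti, ?_⟩
  have himg : (fun θ : ℝ => t 0 + 2 * ∑ k ∈ Finset.Icc 1 (m - 1),
      t k * Real.cos ((k : ℝ) * θ)) = symbolF m t := rfl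
  rw [himg]
  have hfc : Continuous (symbolF m t) := by unfold symbolF; fun_prop
  have hne : (Set.Icc (0:ℝ) (2*Real.pi)).Nonempty := Set.nonempty_Icc.mpr (by positivity)
  obtain ⟨θ₀, hθ₀, hminOn⟩ := isCompact_Icc.exists_isMinOn hne hfc.continuousOn
  have hmin : ∀ θ ∈ Set.Icc (0:ℝ) (2*Real.pi), symbolF m t θ₀ ≤ symbolF m t θ :=
    fun θ hθ => hminOn hθ
  have hsinf : sInf (symbolF m t '' Set.Icc 0 (2 * Real.pi)) = symbolF m t θ₀ := by
    apply le_antisymm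
    · refine csInf_le ⟨symbolF m t θ₀, ?_⟩ ⟨θ₀, hθ₀, rfl⟩
      rintro y ⟨x, hx, rfl⟩
      exact hmin x hx
    · refine le_csInf ⟨symbolF m t θ₀, θ₀, hθ₀, rfl⟩ ?_
      rintro y ⟨x, hx, rfl⟩
      exact hmin x hx
  rw [hsinf]
  have hlow : ∀ n, symbolF m t θ₀ ≤ lmin n := by
    intro n
    obtain ⟨⟨v, hv0, hveq⟩, -⟩ := hlmin n
    have h1 := quad_ge m hm t (n+1) (symbolF m t θ₀) hmin v
    rw [hray n v hveq] at h1
    have h2 := hdotpos v hv0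
    nlinarith [h1]
  set c := symbolF m t θ₀ with hc
  set D := bS m t θ₀ (m-1) - ((m-1:ℕ):ℝ) * c with hD
  have hupper : ∀ n, m - 1 ≤ n + 1 → lmin n ≤ c + D / ((n+1:ℕ):ℝ) := by
    intro n hn
    have ha := rayleigh_lb m (n+1) t (lmin n) (hlmin n).2
      (fun j : Fin (n+1) => Real.cos (((j:ℕ):ℝ)*θ₀))
    have hb := rayleigh_lb m (n+1) t (lmin n) (hlmin n).2
      (fun j : Fin (n+1) => Real.sin (((j:ℕ):ℝ)*θ₀))
    have h2 := add_le_add ha hb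
    rw [quad_trig m (n+1) t θ₀, ← mul_add, dot_trig (n+1) θ₀] at h2
    have hS := bS_formula m hm t θ₀ (n+1) hn
    have hnn : ((n+1 - (m-1) : ℕ) : ℝ) = ((n+1:ℕ):ℝ) - ((m-1:ℕ):ℝ) := by
      rw [Nat.cast_sub hn]
    rw [hS, hnn] at h2
    have hpos : (0:ℝ) < ((n+1:ℕ):ℝ) := by positivity
    calc lmin n ≤ (((n+1:ℕ):ℝ) * c + D) / ((n+1:ℕ):ℝ) := by
          rw [le_div_iff₀ hpos]; rw [hD]; linarith
      _ = c + D / ((n+1:ℕ):ℝ) := by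
          rw [add_div, mul_div_cancel_left₀ _ hpos.ne']
  have htop : Filter.Tendsto (fun n : ℕ => c + D / ((n+1:ℕ):ℝ))
      Filter.atTop (nhds c) := by
    have h0 : Filter.Tendsto (fun n : ℕ => D / ((n+1:ℕ):ℝ)) Filter.atTop (nhds 0) :=
      (tendsto_const_div_atTop_nhds_zero_nat D).comp (Filter.tendsto_add_atTop_nat 1)
    simpa using Filter.Tendsto.const_add c h0
  apply tendsto_of_tendsto_of_tendsto_of_le_of_le' tendsto_const_nhds htop
  · exact Filter.Eventually.of_forall hlow
  · filter_upwards [Filter.eventually_ge_atTop m] with n hn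
    exact hupper n (by omega)
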